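/- Let A be a unital C*-algebra and a ∈ A a positive invertible element with ‖a‖ ≤ 1. Set m = ‖a⁻¹‖⁻¹ (the minimum of the spectrum of a). Then for every λ with 1/2 ≤ λ ≤ (1+m)/2 there exist unitaries u₁, u₂ ∈ A with a = λu₁ + (1−λ)u₂. -/

import Mathlib

lemma aux_unitary_mem {A : Type*} [NormedRing A] [StarRing A] [CStarRing A] [CompleteSpace A]
    [NormedAlgebra ℂ A] [StarModule ℂ A]
    (b c : A) (hb : IsSelfAdjoint b) (hc : IsSelfAdjoint c)
    (hcomm : b * c = c * b) (h : b * b + c * c = 1) :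
    (b + Complex.I • c) ∈ unitary A := by
  have hstar : star (b + Complex.I • c) = b - Complex.I • c := by
    simp [star_smul, hb.star_eq, hc.star_eq, Complex.conj_I, sub_eq_add_neg, neg_smul]
  have key : ∀ x y : A, (x - Complex.I • y) * (x + Complex.I • y)
      = x * x + y * y + Complex.I • (x * y - y * x) := by
    intro x y
    simp only [sub_mul, mul_add, add_mul, mul_smul_comm, smul_mul_assoc, smul_smul,
      Complex.I_mul_I, neg_one_smul, smul_sub]
    abel
  constructor
  · rw [hstar, key, hcomm, sub_self, smul_zero, add_zero, h]
  · have h1 : b + Complex.I • c = b - Complex.I • (-c) := by simp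
    have h2 : b - Complex.I • c = b + Complex.I • (-c) := by simp [sub_eq_add_neg]
    rw [hstar, h1, h2, key]
    simp only [mul_neg, neg_mul, neg_neg, neg_sub]
    rw [hcomm, sub_self, smul_zero, add_zero, h]

theorem stmt_3 {A : Type*} [NormedRing A] [StarRing A] [CStarRing A] [CompleteSpace A]
    [NormedAlgebra ℂ A] [StarModule ℂ A] [PartialOrder A] [StarOrderedRing A]
    (a : Aˣ) (ha : 0 ≤ (a : A)) (hna : ‖(a : A)‖ ≤ 1)
    (lam : ℝ) (h1 : 1 / 2 ≤ lam) (h2 : lam ≤ (1 + ‖((a⁻¹ : Aˣ) : A)‖⁻¹) / 2) :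
    ∃ u₁ u₂ : A, u₁ ∈ unitary A ∧ u₂ ∈ unitary A ∧
      (a : A) = ((lam : ℂ)) • u₁ + (((1 - lam : ℝ) : ℂ)) • u₂ := by
  obtain (hA | hA) := subsingleton_or_nontrivial A
  · exact ⟨1, 1, one_mem _, one_mem _, Subsingleton.elim _ _⟩
  letI : CStarAlgebra A := { }
  set m : ℝ := ‖((a⁻¹ : Aˣ) : A)‖⁻¹ with hm
  have hsa : IsSelfAdjoint (a : A) := IsSelfAdjoint.of_nonneg ha
  have hainv : (0:ℝ) < ‖((a⁻¹ : Aˣ) : A)‖ := norm_pos_iff.mpr (Units.ne_zero _)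
  have hmpos : 0 < m := inv_pos.mpr hainv
  have hspec : ∀ x ∈ spectrum ℝ (a : A), m ≤ x ∧ x ≤ 1 := by
    intro x hx
    have hx0 : x ≠ 0 := by
      rintro rfl
      exact Units.zero_notMem_spectrum ℝ a hx
    have hxpos : 0 < x := lt_of_le_of_ne (spectrum_nonneg_of_nonneg ha hx) (Ne.symm hx0)
    have hinv : x⁻¹ ∈ spectrum ℝ ((a⁻¹ : Aˣ) : A) := by
      have := spectrum.inv_mem_iff (R := ℝ) (r := Units.mk0 x hx0) (a := a) |>.mp hx
      simpa using this
    have hb : ‖x⁻¹‖ ≤ ‖((a⁻¹ : Aˣ) : A)‖ := spectrum.norm_le_norm_of_mem hinv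
    rw [Real.norm_eq_abs, abs_of_pos (by positivity)] at hb
    constructor
    · rw [hm, inv_le_comm₀ hainv hxpos]
      exact hb
    · have := spectrum.norm_le_norm_of_mem hx
      rw [Real.norm_eq_abs, abs_of_pos hxpos] at this
      linarith
  by_cases hm1 : 1 ≤ m
  · -- here a = 1
    have ha1 : (a : A) = 1 := by
      conv_lhs => rw [← cfc_id ℝ (a : A)]
      rw [← cfc_one ℝ (a : A)]
      apply cfc_congr
      intro x hx
      obtain ⟨hx1, hx2⟩ := hspec x hx
      simp only [id_eq, Pi.one_apply]
      linarith
    refine ⟨1, 1, one_mem _, one_mem _, ?_⟩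
    have hc : ((lam : ℂ)) + (((1 - lam : ℝ) : ℂ)) = 1 := by push_cast; ring
    rw [ha1, ← add_smul, hc, one_smul]
  · push_neg at hm1
    have hlam1 : lam < 1 := by linarith
    have hμpos : 0 < 1 - lam := by linarith
    have hlampos : 0 < lam := by linarith
    set S := spectrum ℝ (a : A) with hS
    have hxpos : ∀ x ∈ S, 0 < x := fun x hx => lt_of_lt_of_le hmpos (hspec x hx).1
    set f₁ : ℝ → ℝ := fun x => (x^2 + lam^2 - (1-lam)^2) / (2*lam*x) with hf₁
    set f₂ : ℝ → ℝ := fun x => (x^2 + (1-lam)^2 - lam^2) / (2*(1-lam)*x) with hf₂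
    set g₁ : ℝ → ℝ := fun x => Real.sqrt (1 - f₁ x ^ 2) with hg₁
    set g₂ : ℝ → ℝ := fun x => -(lam/(1-lam)) * g₁ x with hg₂
    have hcf₁ : ContinuousOn f₁ S := by
      rw [hf₁]
      apply ContinuousOn.div (by fun_prop) (by fun_prop)
      intro x hx
      have := hxpos x hx
      positivity
    have hcf₂ : ContinuousOn f₂ S := by
      rw [hf₂]
      apply ContinuousOn.div (by fun_prop) (by fun_prop)
      intro x hx
      have := hxpos x hx
      positivity
    have hcg₁ : ContinuousOn g₁ S := by
      rw [hg₁]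
      exact Real.continuous_sqrt.comp_continuousOn (continuousOn_const.sub (hcf₁.pow 2))
    have hcg₂ : ContinuousOn g₂ S := by
      rw [hg₂]
      exact continuousOn_const.mul hcg₁
    have hf₁sq : ∀ x ∈ S, f₁ x ^ 2 ≤ 1 := by
      intro x hx
      obtain ⟨hx1, hx2⟩ := hspec x hx
      have hxp := hxpos x hx
      have h2m : 2 * lam - 1 ≤ x := by linarith
      simp only [hf₁]
      rw [div_pow, div_le_one (by positivity)]
      nlinarith [mul_nonneg (mul_nonneg (by linarith : (0:ℝ) ≤ 1 - x)
        (by linarith : (0:ℝ) ≤ x - (2*lam-1)))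
        (mul_nonneg (by linarith : (0:ℝ) ≤ x + (2*lam-1)) (by linarith : (0:ℝ) ≤ x + 1))]
    have hg₁sq : ∀ x ∈ S, g₁ x ^ 2 = 1 - f₁ x ^ 2 := by
      intro x hx
      simp only [hg₁]
      exact Real.sq_sqrt (by linarith [hf₁sq x hx])
    have hid : ∀ x ∈ S, lam^2 * (1 - f₁ x ^ 2) = (1-lam)^2 * (1 - f₂ x ^ 2) := by
      intro x hx
      have hxp : x ≠ 0 := (hxpos x hx).ne'
      simp only [hf₁, hf₂]
      field_simp
      ring
    have hone₁ : ∀ x ∈ S, f₁ x * f₁ x + g₁ x * g₁ x = 1 := by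
      intro x hx
      have := hg₁sq x hx
      nlinarith [this]
    have hone₂ : ∀ x ∈ S, f₂ x * f₂ x + g₂ x * g₂ x = 1 := by
      intro x hx
      have hgg := hg₁sq x hx
      have hii := hid x hx
      have hμ : (1 : ℝ) - lam ≠ 0 := hμpos.ne'
      simp only [hg₂]
      have : (-(lam/(1-lam)) * g₁ x) * (-(lam/(1-lam)) * g₁ x)
          = lam^2 * (1 - f₁ x ^ 2) / (1-lam)^2 := by
        rw [show (-(lam/(1-lam)) * g₁ x) * (-(lam/(1-lam)) * g₁ x)
            = (lam/(1-lam))^2 * g₁ x ^ 2 by ring, hgg]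
        field_simp
      rw [this, hii]
      field_simp
      ring
    have hsumid : ∀ x ∈ S, lam * f₁ x + (1-lam) * f₂ x = x := by
      intro x hx
      have hxp : x ≠ 0 := (hxpos x hx).ne'
      simp only [hf₁, hf₂]
      field_simp
      ring
    have hsum0 : ∀ x ∈ S, lam * g₁ x + (1-lam) * g₂ x = 0 := by
      intro x hx
      have hμ : (1 : ℝ) - lam ≠ 0 := hμpos.ne'
      simp only [hg₂]
      field_simp
      ring
    set b₁ := cfc f₁ (a : A) with hb₁
    set c₁ := cfc g₁ (a : A) with hc₁
    set b₂ := cfc f₂ (a : A) with hb₂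
    set c₂ := cfc g₂ (a : A) with hc₂
    have hunit : ∀ (f g : ℝ → ℝ), ContinuousOn f S → ContinuousOn g S →
        (∀ x ∈ S, f x * f x + g x * g x = 1) →
        (cfc f (a : A) + Complex.I • cfc g (a : A)) ∈ unitary A := by
      intro f g hcf hcg hone
      apply aux_unitary_mem _ _ (cfc_predicate f _) (cfc_predicate g _)
      · exact (cfc_commute_cfc f g (a : A)).eq
      · rw [← cfc_mul f f _ hcf hcf, ← cfc_mul g g _ hcg hcg,
          ← cfc_add (a := (a : A)) (fun x => f x * f x) (fun x => g x * g x) (hcf.mul hcf) (hcg.mul hcg), ← cfc_one ℝ (a : A)]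
        exact cfc_congr fun x hx => hone x hx
    have hr1 : lam • b₁ + (1-lam) • b₂ = (a : A) := by
      rw [hb₁, hb₂, ← cfc_const_mul lam f₁ _ hcf₁, ← cfc_const_mul (1-lam) f₂ _ hcf₂,
        ← cfc_add (a := (a : A)) (fun x => lam * f₁ x) (fun x => (1-lam) * f₂ x) (continuousOn_const.mul hcf₁) (continuousOn_const.mul hcf₂)]
      conv_rhs => rw [← cfc_id ℝ (a : A)]
      exact cfc_congr fun x hx => hsumid x hx
    have hr2 : lam • c₁ + (1-lam) • c₂ = 0 := by
      rw [hc₁, hc₂, ← cfc_const_mul lam g₁ _ hcg₁, ← cfc_const_mul (1-lam) g₂ _ hcg₂,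
        ← cfc_add (a := (a : A)) (fun x => lam * g₁ x) (fun x => (1-lam) * g₂ x) (continuousOn_const.mul hcg₁) (continuousOn_const.mul hcg₂)]
      calc cfc (fun x => lam * g₁ x + (1-lam) * g₂ x) (a : A)
          = cfc (0 : ℝ → ℝ) (a : A) := cfc_congr fun x hx => hsum0 x hx
        _ = 0 := cfc_zero ℝ _
    refine ⟨b₁ + Complex.I • c₁, b₂ + Complex.I • c₂,
      hunit f₁ g₁ hcf₁ hcg₁ hone₁, hunit f₂ g₂ hcf₂ hcg₂ hone₂, ?_⟩
    rw [Complex.coe_smul, Complex.coe_smul]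
    have expand : lam • (b₁ + Complex.I • c₁) + (1-lam) • (b₂ + Complex.I • c₂)
        = (lam • b₁ + (1-lam) • b₂) + Complex.I • (lam • c₁ + (1-lam) • c₂) := by
      simp only [smul_add, smul_comm lam Complex.I, smul_comm (1-lam) Complex.I, smul_add]
      abel
    rw [expand, hr1, hr2, smul_zero, add_zero]
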